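/- arXiv:2101.04518 — 3 statements merged into one kernel-verified Lean document; each statement's English description precedes it below -/
import Mathlib

section
/- Let q ≥ 2 be an integer and let n, k, t be positive integers with t < k and 2k ≤ n. Then q^{(k-t)^2} · [n-k choose k-t]_q · [k choose t]_q > [n-t choose k-t]_q. -/
/-- The Gaussian binomial coefficient `[a choose b]_q`, defined (for an integer `q ≥ 2`)
as the product `∏_{0 ≤ i < b} (q^(a-i) - 1)/(q^(b-i) - 1)`, viewed as a rational number. -/
noncomputable def gaussBinom (q a b : ℕ) : ℚ :=
  ∏ i ∈ Finset.range b, (((q : ℚ) ^ (a - i) - 1) / ((q : ℚ) ^ (b - i) - 1))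

lemma pow_sub_one_pos (q m : ℕ) (hq : 2 ≤ q) (hm : 1 ≤ m) : (0:ℚ) < (q:ℚ)^m - 1 := by
  have h1 : (2:ℚ) ≤ (q:ℚ) := by exact_mod_cast hq
  have : (1:ℚ) < (q:ℚ)^m := one_lt_pow₀ (by linarith) (by omega)
  linarith

lemma gaussBinom_pos (q a b : ℕ) (hq : 2 ≤ q) (hab : b ≤ a) : 0 < gaussBinom q a b := by
  unfold gaussBinom
  apply Finset.prod_pos
  intro i hi
  rw [Finset.mem_range] at hi
  exact div_pos (pow_sub_one_pos q (a-i) hq (by omega)) (pow_sub_one_pos q (b-i) hq (by omega))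

lemma gauss_lower (q k t : ℕ) (hq : 2 ≤ q) (ht : 0 < t) (htk : t < k) :
    (q:ℚ) ^ (k - t) < gaussBinom q k t := by
  have hq1 : (2:ℚ) ≤ (q:ℚ) := by exact_mod_cast hq
  have hd1 : (1:ℚ) < (q:ℚ) ^ (k - t) := one_lt_pow₀ (by linarith) (by omega)
  have key : ∏ i ∈ Finset.range t, (q:ℚ) ^ (k - t)
      < ∏ i ∈ Finset.range t, (((q : ℚ) ^ (k - i) - 1) / ((q : ℚ) ^ (t - i) - 1)) := by
    apply Finset.prod_lt_prod_of_nonempty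
    · intro i _; positivity
    · intro i hi
      rw [Finset.mem_range] at hi
      have hden : (0:ℚ) < (q:ℚ)^(t-i) - 1 := pow_sub_one_pos q (t-i) hq (by omega)
      rw [lt_div_iff₀ hden]
      have hexp : (k - t) + (t - i) = k - i := by omega
      have : (q:ℚ)^(k-t) * (q:ℚ)^(t-i) = (q:ℚ)^(k-i) := by rw [← pow_add, hexp]
      nlinarith
    · exact Finset.nonempty_range_iff.mpr (by omega)
  rw [Finset.prod_const, Finset.card_range] at key
  unfold gaussBinom
  calc (q:ℚ) ^ (k - t) ≤ ((q:ℚ) ^ (k - t)) ^ t := by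
        nth_rewrite 1 [← pow_one ((q:ℚ) ^ (k - t))]
        exact pow_le_pow_right₀ (by linarith) (by omega)
    _ < _ := key

/-- For an integer `q ≥ 2` and positive integers `t < k`, `2k ≤ n`,
`q^((k-t)^2) [n-k choose k-t]_q [k choose t]_q > [n-t choose k-t]_q`. -/
theorem claim1 (q n k t : ℕ) (hq : 2 ≤ q) (ht : 0 < t) (htk : t < k) (hn : 2 * k ≤ n) :
    gaussBinom q (n - t) (k - t)
      < (q : ℚ) ^ ((k - t) ^ 2) * gaussBinom q (n - k) (k - t) * gaussBinom q k t := by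
  set d := k - t with hd
  have hq1 : (2:ℚ) ≤ (q:ℚ) := by exact_mod_cast hq
  have hG2 : 0 < gaussBinom q (n - k) d := gaussBinom_pos q (n-k) d hq (by omega)
  have hB : (q:ℚ) ^ d < gaussBinom q k t := gauss_lower q k t hq ht htk
  -- step 2 : termwise bound
  have step2 : gaussBinom q (n - t) d ≤ (q:ℚ) ^ (d * (d+1)) * gaussBinom q (n - k) d := by
    unfold gaussBinom
    have := Finset.prod_le_prod (s := Finset.range d)
      (f := fun i => (((q : ℚ) ^ (n - t - i) - 1) / ((q : ℚ) ^ (d - i) - 1)))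
      (g := fun i => (q:ℚ)^(d+1) * (((q : ℚ) ^ (n - k - i) - 1) / ((q : ℚ) ^ (d - i) - 1)))
      ?_ ?_
    · calc _ ≤ _ := this
        _ = _ := by
          rw [Finset.prod_mul_distrib, Finset.prod_const, Finset.card_range, ← pow_mul,
            mul_comm (d+1) d]
    · intro i hi
      rw [Finset.mem_range] at hi
      have h1 : (0:ℚ) < (q:ℚ)^(n-t-i) - 1 := pow_sub_one_pos q _ hq (by omega)
      have h2 : (0:ℚ) < (q:ℚ)^(d-i) - 1 := pow_sub_one_pos q _ hq (by omega)
      positivity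
    · intro i hi
      rw [Finset.mem_range] at hi
      have hden : (0:ℚ) < (q:ℚ)^(d-i) - 1 := pow_sub_one_pos q _ hq (by omega)
      rw [mul_div_assoc', div_le_div_iff_of_pos_right hden]
      have hexp : (n - k - i) + d = n - t - i := by omega
      have hsplit : (q:ℚ)^(n-k-i) * (q:ℚ)^d = (q:ℚ)^(n-t-i) := by rw [← pow_add, hexp]
      have hx : (q:ℚ) ≤ (q:ℚ)^(n-k-i) := by
        nth_rewrite 1 [← pow_one (q:ℚ)]
        exact pow_le_pow_right₀ (by linarith) (by omega)
      have hP : (0:ℚ) ≤ (q:ℚ)^d := by positivity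
      have hsplit2 : (q:ℚ)^(d+1) = (q:ℚ)^d * (q:ℚ) := by ring
      have h1 : (0:ℚ) ≤ (q:ℚ)^(n-k-i) * (q:ℚ)^d * ((q:ℚ)-2) := by
        apply mul_nonneg (mul_nonneg (by positivity) hP); linarith
      have h2 : (q:ℚ) * (q:ℚ)^d ≤ (q:ℚ)^(n-k-i) * (q:ℚ)^d :=
        mul_le_mul_of_nonneg_right hx hP
      rw [← hsplit, hsplit2]
      nlinarith [h1, h2]
  have hdsq : (q:ℚ) ^ (d * (d+1)) = (q:ℚ)^(d^2) * (q:ℚ)^d := by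
    rw [← pow_add]; ring_nf
  have hqd2 : (0:ℚ) < (q:ℚ)^(d^2) := by positivity
  calc gaussBinom q (n - t) d ≤ (q:ℚ)^(d^2) * (q:ℚ)^d * gaussBinom q (n - k) d := by
        rw [← hdsq]; exact step2
    _ < (q:ℚ)^(d^2) * gaussBinom q (n - k) d * gaussBinom q k t := by
        have := mul_lt_mul_of_pos_left hB (mul_pos hqd2 hG2)
        calc (q:ℚ)^(d^2) * (q:ℚ)^d * gaussBinom q (n - k) d
            = (q:ℚ)^(d^2) * gaussBinom q (n - k) d * (q:ℚ)^d := by ring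
          _ < (q:ℚ)^(d^2) * gaussBinom q (n - k) d * gaussBinom q k t := this
end

section
/- Let q be a prime power and let n, k, t be positive integers with t < k and 2k ≤ n. Then the maximum degree Δ of the generalized q-Kneser graph K_q(n,k,t) plus the independence number [n-t choose k-t]_q is strictly less than the number of vertices [n choose k]_q. -/
/-- The Gaussian binomial coefficient `[a choose b]_q` as a natural number:
`(∏_{0 ≤ i < b} (q^(a-i) - 1)) / (∏_{0 ≤ i < b} (q^(b-i) - 1))` (the quotient is exact).
It counts the `b`-dimensional subspaces of an `a`-dimensional vector space over `F_q`. -/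
def gaussBinomNat (q a b : ℕ) : ℕ :=
  (∏ i ∈ Finset.range b, (q ^ (a - i) - 1)) / (∏ i ∈ Finset.range b, (q ^ (b - i) - 1))

def G (q : ℕ) : ℕ → ℕ → ℕ
  | _, 0 => 1
  | 0, _+1 => 0
  | a+1, b+1 => G q a b + q ^ (b+1) * G q a (b+1)


@[simp] lemma G_zero_right (q a : ℕ) : G q a 0 = 1 := by cases a <;> rfl


@[simp] lemma G_zero_left (q b : ℕ) : G q 0 (b+1) = 0 := rfl


lemma G_succ_succ (q a b : ℕ) : G q (a+1) (b+1) = G q a b + q ^ (b+1) * G q a (b+1) := rfl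


lemma G_eq_zero_of_lt (q : ℕ) : ∀ {a b : ℕ}, a < b → G q a b = 0 := by
  intro a
  induction a with
  | zero => intro b hb; obtain ⟨c, rfl⟩ := Nat.exists_eq_succ_of_ne_zero (by omega : b ≠ 0); rfl
  | succ a ih =>
    intro b hb
    obtain ⟨c, rfl⟩ := Nat.exists_eq_succ_of_ne_zero (by omega : b ≠ 0)
    rw [G_succ_succ, ih (by omega), ih (by omega)]
    ring


lemma one_le_G (q : ℕ) : ∀ {a b : ℕ}, b ≤ a → 1 ≤ G q a b := by
  intro a
  induction a with
  | zero => intro b hb; interval_cases b; simp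
  | succ a ih =>
    intro b hb
    cases b with
    | zero => simp
    | succ c => rw [G_succ_succ]; have := ih (by omega : c ≤ a); omega


lemma G_le_G_add (q a b c : ℕ) : G q a b ≤ G q (a+c) (b+c) := by
  induction c with
  | zero => simp
  | succ c ih =>
    calc G q a b ≤ G q (a+c) (b+c) := ih
    _ ≤ G q (a+c+1) (b+c+1) := by rw [G_succ_succ]; omega


lemma prod_key (q : ℕ) (hq : 2 ≤ q) : ∀ a b : ℕ,
    (∏ i ∈ Finset.range b, (q ^ (a - i) - 1)) =
      G q a b * ∏ i ∈ Finset.range b, (q ^ (b - i) - 1) := by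
  intro a
  induction a with
  | zero =>
    intro b
    cases b with
    | zero => simp [G]
    | succ c =>
      rw [Finset.prod_eq_zero (Finset.mem_range.2 (Nat.succ_pos c)) (by simp)]
      simp [G]
  | succ a ih =>
    intro b
    cases b with
    | zero => simp [G]
    | succ c =>
      have hL : (∏ i ∈ Finset.range (c+1), (q ^ (a + 1 - i) - 1)) =
          (∏ i ∈ Finset.range c, (q ^ (a - i) - 1)) * (q ^ (a+1) - 1) := by
        rw [Finset.prod_range_succ', Nat.sub_zero]
        exact congrArg₂ _ (Finset.prod_congr rfl fun i _ => by congr 2; omega) rfl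
      have hD : (∏ i ∈ Finset.range (c+1), (q ^ (c + 1 - i) - 1)) =
          (∏ i ∈ Finset.range c, (q ^ (c - i) - 1)) * (q ^ (c+1) - 1) := by
        rw [Finset.prod_range_succ', Nat.sub_zero]
        exact congrArg₂ _ (Finset.prod_congr rfl fun i _ => by congr 2; omega) rfl
      have ih2 := ih (c+1)
      rw [Finset.prod_range_succ, hD] at ih2
      have ihc := ih c
      rw [hL, hD, G_succ_succ]
      set N := ∏ i ∈ Finset.range c, (q ^ (a - i) - 1) with hN
      set D := ∏ i ∈ Finset.range c, (q ^ (c - i) - 1) with hDD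
      rcases le_or_gt c a with h | h
      · have hmul : q ^ (c+1) * (q ^ (a - c) - 1) = q ^ (a+1) - q ^ (c+1) := by
          rw [Nat.mul_sub, mul_one, ← pow_add]
          congr 2
          omega
        have h1 : (1:ℕ) ≤ q ^ (c+1) := Nat.one_le_pow _ _ (by omega)
        have h2 : q ^ (c+1) ≤ q ^ (a+1) := Nat.pow_le_pow_right (by omega) (by omega)
        calc N * (q ^ (a+1) - 1)
            = N * ((q ^ (c+1) - 1) + q ^ (c+1) * (q ^ (a-c) - 1)) := by rw [hmul]; congr 1; omega
          _ = N * (q ^ (c+1) - 1) + q ^ (c+1) * (N * (q ^ (a-c) - 1)) := by ring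
          _ = (G q a c * D) * (q ^ (c+1) - 1)
              + q ^ (c+1) * (G q a (c+1) * (D * (q ^ (c+1) - 1))) := by rw [ih2, ihc]
          _ = (G q a c + q ^ (c+1) * G q a (c+1)) * (D * (q ^ (c+1) - 1)) := by ring
      · have hz : N = 0 :=
          Finset.prod_eq_zero (Finset.mem_range.2 h) (by simp)
        have h3 : G q a c * D = 0 := by rw [← ihc, hz]
        have h4 : G q a (c+1) * (D * (q ^ (c+1) - 1)) = 0 := by rw [← ih2, hz, zero_mul]
        calc N * (q ^ (a+1) - 1) = 0 := by rw [hz, zero_mul]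
          _ = (G q a c * D) * (q ^ (c+1) - 1)
              + q ^ (c+1) * (G q a (c+1) * (D * (q ^ (c+1) - 1))) := by rw [h3, h4]; ring
          _ = (G q a c + q ^ (c+1) * G q a (c+1)) * (D * (q ^ (c+1) - 1)) := by ring


lemma gaussBinomNat_eq_G (q : ℕ) (hq : 2 ≤ q) (a b : ℕ) : gaussBinomNat q a b = G q a b := by
  have hD : 0 < ∏ i ∈ Finset.range b, (q ^ (b - i) - 1) := by
    apply Finset.prod_pos
    intro i hi
    have h1 : b - i ≠ 0 := by simp at hi; omega
    have : 2 ≤ q ^ (b - i) := by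
      calc 2 = 2 ^ 1 := (pow_one 2).symm
      _ ≤ 2 ^ (b - i) := Nat.pow_le_pow_right (by norm_num) (by omega)
      _ ≤ q ^ (b - i) := Nat.pow_le_pow_left hq _
    omega
  rw [gaussBinomNat, prod_key q hq a b, Nat.mul_div_cancel _ hD]


lemma G_vandermonde (q : ℕ) : ∀ p r m : ℕ, G q (m + p) r =
    ∑ j ∈ Finset.range (r+1), q ^ (j * (p + j - r)) * G q m j * G q p (r - j) := by
  intro p
  induction p with
  | zero =>
    intro r m
    rw [Finset.sum_eq_single_of_mem r (Finset.self_mem_range_succ r)]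
    · simp
    · intro j hj hne
      have : r - j ≠ 0 := by simp at hj; omega
      obtain ⟨c, hc⟩ := Nat.exists_eq_succ_of_ne_zero this
      rw [hc]
      simp [G]
  | succ p ih =>
    intro r m
    cases r with
    | zero => simp
    | succ s =>
      have hm : m + (p+1) = (m+p) + 1 := by omega
      rw [hm, G_succ_succ, ih s m, ih (s+1) m]
      have key : ∀ j ∈ Finset.range (s+1),
          q ^ (s+1) * (q ^ (j * (p + j - (s+1))) * G q m j * G q p (s+1 - j)) =
          q ^ (j * (p + 1 + j - (s+1))) * G q m j * (q ^ (s+1-j) * G q p (s+1 - j)) := by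
        intro j hj
        simp only [Finset.mem_range] at hj
        rcases le_or_gt (s+1) (p+j) with h | h
        · have he : (s+1) + j * (p + j - (s+1)) = j * (p + 1 + j - (s+1)) + (s+1-j) := by
            have h1 : p + 1 + j - (s+1) = (p + j - (s+1)) + 1 := by omega
            rw [h1, Nat.mul_succ]
            omega
          rw [← mul_assoc, ← mul_assoc, ← pow_add, he, pow_add]
          ring
        · have : G q p (s+1-j) = 0 := G_eq_zero_of_lt q (by omega)
          rw [this]
          ring
      have hB : q ^ (s+1) * (∑ j ∈ Finset.range (s+1+1),
            q ^ (j * (p + j - (s+1))) * G q m j * G q p (s+1 - j)) =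
          (∑ j ∈ Finset.range (s+1),
            q ^ (j * (p + 1 + j - (s+1))) * G q m j * (q ^ (s+1-j) * G q p (s+1 - j)))
          + q ^ ((s+1) * (p+1)) * G q m (s+1) := by
        rw [Finset.mul_sum, Finset.sum_range_succ, Finset.sum_congr rfl key]
        congr 1
        simp only [Nat.add_sub_cancel, Nat.sub_self, G_zero_right, mul_one]
        rw [← mul_assoc, ← pow_add]
        congr 1
        ring
      have hT : (∑ j ∈ Finset.range (s+1+1),
            q ^ (j * (p + 1 + j - (s+1))) * G q m j * G q (p+1) (s+1 - j)) =
          ((∑ j ∈ Finset.range (s+1), q ^ (j * (p + 1 + j - (s+1))) * G q m j * G q p (s - j))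
          + ∑ j ∈ Finset.range (s+1),
              q ^ (j * (p + 1 + j - (s+1))) * G q m j * (q ^ (s+1-j) * G q p (s+1 - j)))
          + q ^ ((s+1) * (p+1)) * G q m (s+1) := by
        rw [Finset.sum_range_succ]
        congr 1
        · rw [← Finset.sum_add_distrib]
          apply Finset.sum_congr rfl
          intro j hj
          simp only [Finset.mem_range] at hj
          have h2 : s + 1 - j = (s - j) + 1 := by omega
          rw [h2, G_succ_succ]
          have h3 : s - j + 1 = s + 1 - j := by omega
          rw [h3]
          ring
        · simp only [Nat.add_sub_cancel, Nat.sub_self, G_zero_right, mul_one]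
      have hA : (∑ j ∈ Finset.range (s+1), q ^ (j * (p + j - s)) * G q m j * G q p (s - j)) =
          ∑ j ∈ Finset.range (s+1), q ^ (j * (p + 1 + j - (s+1))) * G q m j * G q p (s - j) := by
        apply Finset.sum_congr rfl
        intro j hj
        have h4 : p + 1 + j - (s+1) = p + j - s := by omega
        rw [h4]
      rw [hB, hT, hA]
      ring

/-- For a prime power `q` and positive integers `t < k` with `2k ≤ n`, the maximum degree
`Δ = ∑_{i=0}^{t-1} q^((k-i)^2) [n-k choose k-i]_q [k choose i]_q` of the generalized
`q`-Kneser graph `K_q(n,k,t)` plus its independence number `[n-t choose k-t]_q` is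
strictly less than the number `[n choose k]_q` of vertices. -/
theorem maxDegree_add_indepNum_lt (q n k t : ℕ) (hq : IsPrimePow q) (ht : 0 < t)
    (htk : t < k) (hn : 2 * k ≤ n) :
    (∑ i ∈ Finset.range t,
        q ^ ((k - i) ^ 2) * gaussBinomNat q (n - k) (k - i) * gaussBinomNat q k i)
      + gaussBinomNat q (n - t) (k - t) < gaussBinomNat q n k := by
  have hq2 : 2 ≤ q := hq.two_le
  simp only [gaussBinomNat_eq_G q hq2]
  -- expand [n choose k] by Vandermonde
  have hv1 : G q n k = ∑ j ∈ Finset.range (k+1), q ^ (j * j) * G q (n-k) j * G q k (k - j) := by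
    conv_lhs => rw [show n = (n - k) + k by omega]
    rw [G_vandermonde]
    apply Finset.sum_congr rfl
    intro j hj
    have : k + j - k = j := by omega
    rw [this]
  -- expand [n-t choose k-t] by Vandermonde
  have hv2 : G q (n-t) (k-t) =
      ∑ j ∈ Finset.range (k-t+1), q ^ (j * j) * G q (n-k) j * G q (k-t) (k - t - j) := by
    conv_lhs => rw [show n - t = (n - k) + (k - t) by omega]
    rw [G_vandermonde]
    apply Finset.sum_congr rfl
    intro j hj
    have : k - t + j - (k - t) = j := by omega
    rw [this]
  -- the degree sum equals the top part of the Vandermonde expansion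
  have hΔ : (∑ i ∈ Finset.range t, q ^ ((k - i) ^ 2) * G q (n-k) (k-i) * G q k i) =
      ∑ j ∈ Finset.Ico (k-t+1) (k+1), q ^ (j * j) * G q (n-k) j * G q k (k - j) := by
    apply Finset.sum_nbij' (i := fun i => k - i) (j := fun j => k - j)
    · intro a ha
      simp only [Finset.mem_range] at ha
      simp only [Finset.mem_Ico]
      omega
    · intro a ha
      simp only [Finset.mem_Ico] at ha
      simp only [Finset.mem_range]
      omega
    · intro a ha
      simp only [Finset.mem_range] at ha
      omega
    · intro a ha
      simp only [Finset.mem_Ico] at ha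
      omega
    · intro a ha
      simp only [Finset.mem_range] at ha
      have h1 : k - (k - a) = a := by omega
      rw [h1, pow_two]
  -- split the full expansion
  have hsplit : (∑ j ∈ Finset.range (k+1), q ^ (j * j) * G q (n-k) j * G q k (k - j)) =
      (∑ j ∈ Finset.range (k-t+1), q ^ (j * j) * G q (n-k) j * G q k (k - j))
      + ∑ j ∈ Finset.Ico (k-t+1) (k+1), q ^ (j * j) * G q (n-k) j * G q k (k - j) := by
    rw [Finset.range_eq_Ico, Finset.range_eq_Ico]
    exact (Finset.sum_Ico_consecutive (fun j => q ^ (j * j) * G q (n-k) j * G q k (k - j)) (Nat.zero_le (k-t+1)) (by omega : k-t+1 ≤ k+1)).symm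
  -- strict termwise comparison
  have hstrict : (∑ j ∈ Finset.range (k-t+1), q ^ (j * j) * G q (n-k) j * G q (k-t) (k - t - j))
      < ∑ j ∈ Finset.range (k-t+1), q ^ (j * j) * G q (n-k) j * G q k (k - j) := by
    apply Finset.sum_lt_sum
    · intro j hj
      simp only [Finset.mem_range] at hj
      apply Nat.mul_le_mul_left
      calc G q (k-t) (k - t - j) ≤ G q ((k-t)+t) ((k-t-j)+t) := G_le_G_add q (k-t) (k-t-j) t
        _ = G q k (k - j) := by congr 1 <;> omega
    · refine ⟨k - t, Finset.self_mem_range_succ _, ?_⟩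
      have h1 : k - t - (k - t) = 0 := by omega
      have h2 : k - (k - t) = t := by omega
      rw [h1, h2, G_zero_right, mul_one]
      have ha : 0 < q ^ ((k-t) * (k-t)) * G q (n-k) (k-t) := by
        apply Nat.mul_pos
        · exact Nat.pow_pos (by omega)
        · exact one_le_G q (by omega : k - t ≤ n - k)
      have hb : 2 ≤ G q k t := by
        obtain ⟨k', rfl⟩ : ∃ k', k = k' + 1 := ⟨k - 1, by omega⟩
        obtain ⟨t', rfl⟩ : ∃ t', t = t' + 1 := ⟨t - 1, by omega⟩
        rw [G_succ_succ]
        have h3 : 1 ≤ G q k' t' := one_le_G q (by omega)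
        have h4 : 1 ≤ G q k' (t'+1) := one_le_G q (by omega)
        have h5 : 1 ≤ q ^ (t'+1) := Nat.one_le_pow _ _ (by omega)
        nlinarith
      calc q ^ ((k-t) * (k-t)) * G q (n-k) (k-t)
          < q ^ ((k-t) * (k-t)) * G q (n-k) (k-t) * G q k t := by
            nlinarith
        _ = _ := rfl
  rw [hΔ, hv1, hsplit, hv2]
  omega
end

section
/- Let V be a finite-dimensional vector space over a field and let s, u_1, u_2 be k-dimensional subspaces with dim(u_1 ∩ u_2) = k - 1, dim(s ∩ u_1) ≥ k - 1, dim(s ∩ u_2) ≥ k - 1, and u_1 ∩ u_2 ⊄ s. Then s ⊆ u_1 + u_2. -/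
open Module

/-- Let `s, u₁, u₂` be `k`-dimensional subspaces (`k ≥ 2`) of a finite-dimensional vector
space with `dim(u₁ ∩ u₂) = k - 1`, `dim(s ∩ u₁) ≥ k - 1`, `dim(s ∩ u₂) ≥ k - 1`, and
`u₁ ∩ u₂ ⊄ s`. Then `s ⊆ u₁ + u₂`. -/
theorem le_sup_of_large_inters (K V : Type*) [Field K] [AddCommGroup V] [Module K V]
    [FiniteDimensional K V] (k : ℕ) (hk : 2 ≤ k) (s u₁ u₂ : Submodule K V)
    (hs : finrank K s = k) (hu₁ : finrank K u₁ = k) (hu₂ : finrank K u₂ = k)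
    (h₁₂ : finrank K ↥(u₁ ⊓ u₂) = k - 1)
    (hs₁ : k - 1 ≤ finrank K ↥(s ⊓ u₁)) (hs₂ : k - 1 ≤ finrank K ↥(s ⊓ u₂))
    (hns : ¬ u₁ ⊓ u₂ ≤ s) :
    s ≤ u₁ ⊔ u₂ := by
  have h1 : (s ⊓ u₁) ⊓ (s ⊓ u₂) = s ⊓ (u₁ ⊓ u₂) := by
    ext x; simp; tauto
  have hlt : s ⊓ (u₁ ⊓ u₂) < u₁ ⊓ u₂ :=
    lt_of_le_of_ne inf_le_right (fun h => hns (h ▸ inf_le_left))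
  have hd : finrank K ↥(s ⊓ (u₁ ⊓ u₂)) < k - 1 := h₁₂ ▸ Submodule.finrank_lt_finrank_of_lt hlt
  have hsum := Submodule.finrank_sup_add_finrank_inf_eq (s ⊓ u₁) (s ⊓ u₂)
  rw [h1] at hsum
  have hle : (s ⊓ u₁) ⊔ (s ⊓ u₂) ≤ s := sup_le inf_le_left inf_le_left
  have hk' : finrank K s ≤ finrank K ↥((s ⊓ u₁) ⊔ (s ⊓ u₂)) := by omega
  have heq : (s ⊓ u₁) ⊔ (s ⊓ u₂) = s := Submodule.eq_of_le_of_finrank_le hle hk'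
  rw [← heq]
  exact sup_le (inf_le_right.trans le_sup_left) (inf_le_right.trans le_sup_right)
end
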